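/- Lemma 2 (principal minors of the Kirchhoff matrix via contraction). Let Γ be a weighted digraph on a finite vertex set V = {1,…,n} and let φ be a nonempty subset of V. Then det L_{−φ} = ε(𝒯_{φ*}), i.e., the determinant of the principal submatrix of L(Γ) obtained by deleting the rows and columns indexed by φ equals the sum of the weights of the spanning trees of the contracted digraph Γ_φ diverging from the contracted vertex φ*. -/
import Mathlib


open scoped Classical

/-- The Kirchhoff (Laplacian) matrix of a weighted digraph on vertex set `α` with arc
weights `ε`: `ℓ i j = -ε j i` for `j ≠ i`, and `ℓ i i = ∑_{k ≠ i} ε k i`. -/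
noncomputable def kirchhoff {α : Type*} [Fintype α] [DecidableEq α]
    (ε : α → α → ℝ) : Matrix α α ℝ :=
  Matrix.of fun i j =>
    if i = j then ∑ k ∈ Finset.univ.erase i, ε k i else - ε j i

/-- `F` is a spanning diverging forest: every arc joins distinct vertices, every vertex
has at most one incoming arc, and there are no cycles. -/
def IsDivForest {α : Type*} [Fintype α] [DecidableEq α] (F : Finset (α × α)) : Prop :=
  (∀ p ∈ F, p.1 ≠ p.2) ∧
  (∀ b : α, (F.filter fun p => p.2 = b).card ≤ 1) ∧
  ∀ a : α, ¬ Relation.TransGen (fun x y : α => (x, y) ∈ F) a a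

/-- The weight of a set of arcs: the product of the arc weights. -/
noncomputable def arcWt {α : Type*} (ε : α → α → ℝ) (F : Finset (α × α)) : ℝ :=
  ∏ p ∈ F, ε p.1 p.2

/-- The set of roots of `F`, i.e. the vertices of in-degree 0. -/
noncomputable def rootSet {α : Type*} [Fintype α] [DecidableEq α]
    (F : Finset (α × α)) : Finset α :=
  Finset.univ.filter fun v => ∀ a, (a, v) ∉ F

/-- The set of all spanning diverging forests. -/
noncomputable def divForests (α : Type*) [Fintype α] [DecidableEq α] :
    Finset (Finset (α × α)) :=
  Finset.univ.filter IsDivForest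

/-- The set `𝔉^{i→j}` of spanning diverging forests in which `i` is a root and there is
a directed path from `i` to `j`. -/
noncomputable def divForestsFromTo {α : Type*} [Fintype α] [DecidableEq α] (i j : α) :
    Finset (Finset (α × α)) :=
  Finset.univ.filter fun F => IsDivForest F ∧ (∀ a, (a, i) ∉ F) ∧
    Relation.ReflTransGen (fun x y : α => (x, y) ∈ F) i j

/-- `T` is a spanning tree diverging from the root `r`: every arc joins distinct
vertices, every vertex other than `r` has exactly one incoming arc, `r` has none, and
there are no cycles. -/
def IsDivTreeFrom {α : Type*} [Fintype α] [DecidableEq α] (r : α)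
    (T : Finset (α × α)) : Prop :=
  (∀ p ∈ T, p.1 ≠ p.2) ∧
  (∀ v : α, v ≠ r → (T.filter fun p => p.2 = v).card = 1) ∧
  (∀ a, (a, r) ∉ T) ∧
  ∀ a : α, ¬ Relation.TransGen (fun x y : α => (x, y) ∈ T) a a

/-- The arc weights of the contracted digraph `Γ_φ`, whose vertex set is
`(V ∖ φ) ∪ {φ*}`; the new vertex `φ*` is represented by `none`. -/
noncomputable def contractWt {n : ℕ} (ε : Fin n → Fin n → ℝ) (φ : Finset (Fin n)) :
    Option {v : Fin n // v ∉ φ} → Option {v : Fin n // v ∉ φ} → ℝ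
  | some a, some b => ε a b
  | none, some b => ∑ a ∈ φ, ε a b
  | some a, none => ∑ b ∈ φ, ε a b
  | none, none => 0

set_option linter.unusedSectionVars false

section MTT

variable {γ : Type*} [Fintype γ] [DecidableEq γ]

/-- Lift an element of `γ` to the subtype avoiding `r`, or `none` if it is `r`. -/
noncomputable def liftv (r : γ) (x : γ) : Option {v : γ // v ≠ r} :=
  if h : x = r then none else some ⟨x, h⟩

/-- One step of the "parent" map determined by `f`. -/
noncomputable def qstep (r : γ) (f : {v : γ // v ≠ r} → γ) :
    Option {v : γ // v ≠ r} → Option {v : γ // v ≠ r}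
  | none => none
  | some u => liftv r (f u)

lemma qstep_none (r : γ) (f : {v : γ // v ≠ r} → γ) : qstep r f none = none := rfl

lemma qstep_some (r : γ) (f : {v : γ // v ≠ r} → γ) (u : {v : γ // v ≠ r}) :
    qstep r f (some u) = liftv r (f u) := rfl

lemma qstep_some_eq_some_iff {r : γ} {f : {v : γ // v ≠ r} → γ}
    {u v : {v : γ // v ≠ r}} :
    qstep r f (some u) = some v ↔ f u = ↑v := by
  rw [qstep_some, liftv]
  split_ifs with h
  · constructor
    · intro h'; exact absurd h' (by simp)
    · intro h'; exact absurd (h'.symm.trans h) v.2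
  · simp [Subtype.ext_iff]

lemma qstep_iter_none (r : γ) (f : {v : γ // v ≠ r} → γ) (k : ℕ) :
    (qstep r f)^[k] none = none :=
  Function.iterate_fixed rfl k

lemma qstep_none_absorb {r : γ} {f : {v : γ // v ≠ r} → γ}
    {x : Option {v : γ // v ≠ r}} {k m : ℕ}
    (h : (qstep r f)^[k] x = none) (hkm : k ≤ m) : (qstep r f)^[m] x = none := by
  obtain ⟨j, rfl⟩ := Nat.exists_eq_add_of_le hkm
  rw [Nat.add_comm, Function.iterate_add_apply, h, qstep_iter_none]

/-- `f` "converges": every vertex reaches the root by iterating the parent map. -/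
def ConvTo (r : γ) (f : {v : γ // v ≠ r} → γ) : Prop :=
  ∀ u : {v : γ // v ≠ r}, ∃ k, (qstep r f)^[k] (some u) = none

lemma qstep_periodic_iter {r : γ} {f : {v : γ // v ≠ r} → γ}
    {x : Option {v : γ // v ≠ r}} {d : ℕ} (h : (qstep r f)^[d] x = x) (m : ℕ) :
    (qstep r f)^[m * d] x = x := by
  induction m with
  | zero => simp
  | succ m ih =>
      rw [Nat.succ_mul, Function.iterate_add_apply, h, ih]

lemma qstep_periodic_ne_none {r : γ} {f : {v : γ // v ≠ r} → γ}
    {v : {v : γ // v ≠ r}} {d : ℕ} (hd : 0 < d)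
    (h : (qstep r f)^[d] (some v) = some v) (i : ℕ) :
    (qstep r f)^[i] (some v) ≠ none := by
  intro hn
  have h1 : (qstep r f)^[(i + 1) * d] (some v) = some v := qstep_periodic_iter h _
  have h2 : (qstep r f)^[(i + 1) * d] (some v) = none :=
    qstep_none_absorb hn (by nlinarith)
  rw [h1] at h2; exact Option.some_ne_none _ h2

/-- The set of arcs `(f u, u)`. -/
noncomputable def arcsOf (r : γ) (f : {v : γ // v ≠ r} → γ) : Finset (γ × γ) :=
  Finset.univ.image (fun u : {v : γ // v ≠ r} => (f u, (u : γ)))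

lemma mem_arcsOf {r : γ} {f : {v : γ // v ≠ r} → γ} {p : γ × γ} :
    p ∈ arcsOf r f ↔ ∃ u : {v : γ // v ≠ r}, f u = p.1 ∧ ↑u = p.2 := by
  simp [arcsOf, Prod.ext_iff]

lemma qstep_lift {r : γ} {f : {v : γ // v ≠ r} → γ} {x y : γ}
    (h : (x, y) ∈ arcsOf r f) : qstep r f (liftv r y) = liftv r x ∧ y ≠ r := by
  obtain ⟨u, hx, hy⟩ := mem_arcsOf.mp h
  have hx' : f u = x := hx
  have hy' : (↑u : γ) = y := hy
  have hyr : y ≠ r := by rw [← hy']; exact u.2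
  have hly : liftv r y = some u := by
    rw [liftv, dif_neg hyr]
    congr 1
    exact Subtype.ext hy'.symm
  exact ⟨by rw [hly, qstep_some, hx'], hyr⟩

lemma transGen_qstep {r : γ} {f : {v : γ // v ≠ r} → γ} {x y : γ}
    (h : Relation.TransGen (fun a b => (a, b) ∈ arcsOf r f) x y) :
    ∃ k, 0 < k ∧ (qstep r f)^[k] (liftv r y) = liftv r x := by
  induction h with
  | single h1 => exact ⟨1, Nat.one_pos, (qstep_lift h1).1⟩
  | tail _ hstep ih =>
      obtain ⟨k, hk, hiter⟩ := ih
      refine ⟨k + 1, Nat.succ_pos _, ?_⟩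
      rw [Function.iterate_succ_apply, (qstep_lift hstep).1, hiter]

lemma conv_acyclic {r : γ} {f : {v : γ // v ≠ r} → γ} (hc : ConvTo r f) (a : γ) :
    ¬ Relation.TransGen (fun x y => (x, y) ∈ arcsOf r f) a a := by
  intro h
  have har : a ≠ r := by
    cases h with
    | single h' => exact (qstep_lift h').2
    | tail _ h' => exact (qstep_lift h').2
  obtain ⟨k, hk, hiter⟩ := transGen_qstep h
  have hl : liftv r a = some ⟨a, har⟩ := dif_neg har
  rw [hl] at hiter
  obtain ⟨j, hj⟩ := hc ⟨a, har⟩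
  exact qstep_periodic_ne_none hk hiter j hj

lemma not_conv_periodic {r : γ} {f : {v : γ // v ≠ r} → γ} (hnc : ¬ ConvTo r f) :
    ∃ (v : {v : γ // v ≠ r}) (d : ℕ), 0 < d ∧
      (qstep r f)^[d] (some v) = some v := by
  rw [ConvTo] at hnc
  push_neg at hnc
  obtain ⟨u, hu⟩ := hnc
  obtain ⟨i, j, hne, heq⟩ :=
    Finite.exists_ne_map_eq_of_infinite (fun k : ℕ => (qstep r f)^[k] (some u))
  have heq' : (qstep r f)^[i] (some u) = (qstep r f)^[j] (some u) := heq
  clear heq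
  wlog hlt : i < j generalizing i j
  · exact this j i hne.symm heq'.symm (by omega)
  obtain ⟨v, hv⟩ := Option.ne_none_iff_exists.mp (hu i)
  refine ⟨v, j - i, by omega, ?_⟩
  rw [hv]
  calc (qstep r f)^[j - i] ((qstep r f)^[i] (some u))
      = (qstep r f)^[j] (some u) := by
        rw [← Function.iterate_add_apply]; congr 1; omega
    _ = (qstep r f)^[i] (some u) := heq'.symm

lemma cycle_of_periodic {r : γ} {f : {v : γ // v ≠ r} → γ}
    {v : {v : γ // v ≠ r}} {d : ℕ} (hd : 0 < d)
    (hper : (qstep r f)^[d] (some v) = some v) :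
    ∃ a, Relation.TransGen (fun x y => (x, y) ∈ arcsOf r f) a a := by
  have hne := qstep_periodic_ne_none hd hper
  choose w hw using fun i => Option.ne_none_iff_exists.mp (hne i)
  have hw0 : w 0 = v := by
    have := hw 0; simp only [Function.iterate_zero, id_eq] at this
    exact Option.some_injective _ this
  have hwd : w d = v := by
    have := hw d; rw [hper] at this
    exact Option.some_injective _ this
  have harc : ∀ i, ((↑(w (i + 1)) : γ), (↑(w i) : γ)) ∈ arcsOf r f := by
    intro i
    have h1 : qstep r f (some (w i)) = some (w (i + 1)) := by
      rw [hw i, hw (i + 1)]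
      exact (Function.iterate_succ_apply' _ _ _).symm
    have h2 : f (w i) = ↑(w (i + 1)) := qstep_some_eq_some_iff.mp h1
    exact mem_arcsOf.mpr ⟨w i, h2, rfl⟩
  have hT : ∀ i, Relation.TransGen (fun x y => (x, y) ∈ arcsOf r f)
      (↑(w (i + 1))) (↑(w 0)) := by
    intro i
    induction i with
    | zero => exact Relation.TransGen.single (harc 0)
    | succ n ih => exact Relation.TransGen.head (harc (n + 1)) ih
  have := hT (d - 1)
  have hd1 : d - 1 + 1 = d := by omega
  rw [hd1, hwd, hw0] at this
  exact ⟨↑v, this⟩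

lemma conv_of_acyclic {r : γ} {f : {v : γ // v ≠ r} → γ}
    (h : ∀ a, ¬ Relation.TransGen (fun x y => (x, y) ∈ arcsOf r f) a a) :
    ConvTo r f := by
  by_contra hnc
  obtain ⟨v, d, hd, hper⟩ := not_conv_periodic hnc
  obtain ⟨a, ha⟩ := cycle_of_periodic hd hper
  exact h a ha

/-- The `0/1`-matrix `1 - P_f` whose determinant detects acyclicity. -/
noncomputable def Nmat (r : γ) (f : {v : γ // v ≠ r} → γ) :
    Matrix {v : γ // v ≠ r} {v : γ // v ≠ r} ℝ :=
  Matrix.of fun u v =>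
    (if v = u then (1 : ℝ) else 0) - (if ((v : γ) = f u) then 1 else 0)


lemma Nmat_entry_iff {r : γ} {f : {v : γ // v ≠ r} → γ} {u v : {v : γ // v ≠ r}} :
    ((v : γ) = f u) ↔ qstep r f (some u) = some v := by
  rw [qstep_some_eq_some_iff, eq_comm]

lemma Nmat_det_of_not_conv {r : γ} {f : {v : γ // v ≠ r} → γ}
    (h : ¬ ConvTo r f) : (Nmat r f).det = 0 := by
  classical
  obtain ⟨v, d, hd, hper⟩ := not_conv_periodic h
  set C : Finset {v : γ // v ≠ r} :=
    Finset.univ.filter (fun c => ∃ i, (qstep r f)^[i] (some v) = some c) with hCdef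
  have hvC : v ∈ C := Finset.mem_filter.mpr ⟨Finset.mem_univ _, 0, rfl⟩
  have hne := qstep_periodic_ne_none hd hper
  have hclos : ∀ c ∈ C, ∃ c' ∈ C, qstep r f (some c) = some c' := by
    intro c hc
    obtain ⟨i, hi⟩ := (Finset.mem_filter.mp hc).2
    have h1 : (qstep r f)^[i + 1] (some v) = qstep r f (some c) := by
      rw [Function.iterate_succ_apply', hi]
    obtain ⟨c', hc'⟩ := Option.ne_none_iff_exists.mp (hne (i + 1))
    exact ⟨c', Finset.mem_filter.mpr ⟨Finset.mem_univ _, i + 1, hc'.symm⟩,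
      by rw [← h1, ← hc']⟩
  have hsurj : ∀ c ∈ C, ∃ u ∈ C, qstep r f (some u) = some c := by
    intro c hc
    obtain ⟨i, hi⟩ := (Finset.mem_filter.mp hc).2
    obtain ⟨u, hu⟩ := Option.ne_none_iff_exists.mp (hne (i + d - 1))
    refine ⟨u, Finset.mem_filter.mpr ⟨Finset.mem_univ _, i + d - 1, hu.symm⟩, ?_⟩
    have h1' : (qstep r f)^[i + d - 1 + 1] (some v)
        = qstep r f ((qstep r f)^[i + d - 1] (some v)) :=
      Function.iterate_succ_apply' _ _ _
    have he : i + d - 1 + 1 = i + d := by omega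
    have h1 : qstep r f (some u) = (qstep r f)^[i + d] (some v) := by
      rw [hu, ← h1', he]
    rw [h1, Function.iterate_add_apply, hper, hi]
  -- every fiber of the parent map inside `C` has exactly one element
  have hfib : ∀ c ∈ C, (C.filter (fun u => qstep r f (some u) = some c)).card = 1 := by
    set g : {v : γ // v ≠ r} → {v : γ // v ≠ r} := fun u => (qstep r f (some u)).getD v with hg
    have hgC : ∀ u ∈ C, g u ∈ C := by
      intro u hu
      obtain ⟨c', hc', hqc'⟩ := hclos u hu
      rw [hg]; simp only [hqc', Option.getD_some]; exact hc'
    have hcard : C.card = ∑ c ∈ C, (C.filter (fun u => g u = c)).card :=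
      Finset.card_eq_sum_card_fiberwise hgC
    have hfilter_eq : ∀ c ∈ C, (C.filter (fun u => qstep r f (some u) = some c))
        = (C.filter (fun u => g u = c)) := by
      intro c hc
      apply Finset.filter_congr
      intro u hu
      obtain ⟨c', hc', hqc'⟩ := hclos u hu
      simp only [hg, hqc', Option.getD_some, Option.some_inj]
    have hone_le : ∀ c ∈ C, 1 ≤ (C.filter (fun u => g u = c)).card := by
      intro c hc
      obtain ⟨u, huC, hu⟩ := hsurj c hc
      have : u ∈ C.filter (fun u => g u = c) := by
        refine Finset.mem_filter.mpr ⟨huC, ?_⟩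
        simp only [hg, hu, Option.getD_some]
      exact Finset.card_pos.mpr ⟨u, this⟩ 
    have hsum1 : ∑ c ∈ C, (1 : ℕ) = ∑ c ∈ C, (C.filter (fun u => g u = c)).card := by
      rw [Finset.sum_const, smul_eq_mul, mul_one, hcard]
    have := (Finset.sum_eq_sum_iff_of_le hone_le).mp hsum1
    intro c hc
    rw [hfilter_eq c hc, ← this c hc]
  -- the indicator vector of `C` is a left kernel vector
  set x : {v : γ // v ≠ r} → ℝ := fun u => if u ∈ C then 1 else 0 with hx
  have hx0 : x ≠ 0 := by
    intro h0
    have := congrFun h0 v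
    rw [hx] at this
    simp only [hvC, if_true, Pi.zero_apply] at this
    exact one_ne_zero this
  have hker : Matrix.vecMul x (Nmat r f) = 0 := by
    funext t
    simp only [Pi.zero_apply]
    have hterm : ∀ u : {v : γ // v ≠ r}, x u * (Nmat r f) u t
        = (if u ∈ C then (if t = u then (1:ℝ) else 0) else 0)
          - (if u ∈ C then (if qstep r f (some u) = some t then (1:ℝ) else 0) else 0) := by
      intro u
      rw [hx]
      simp only [Nmat, Matrix.of_apply]
      by_cases hu : u ∈ C
      · rw [if_pos hu, if_pos hu, if_pos hu, one_mul]
        congr 1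
        by_cases h2 : ((t : γ) = f u)
        · rw [if_pos h2, if_pos (Nmat_entry_iff.mp h2)]
        · rw [if_neg h2, if_neg (fun hc => h2 (Nmat_entry_iff.mpr hc))]
      · rw [if_neg hu, if_neg hu, if_neg hu, zero_mul, sub_zero]
    have hstep : Matrix.vecMul x (Nmat r f) t
        = (∑ u, (if u ∈ C then (if t = u then (1:ℝ) else 0) else 0))
          - ∑ u, (if u ∈ C then (if qstep r f (some u) = some t then (1:ℝ) else 0) else 0) := by
      rw [← Finset.sum_sub_distrib]
      simp only [Matrix.vecMul, dotProduct]
      exact Finset.sum_congr rfl (fun u _ => hterm u)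
    rw [hstep, Finset.sum_ite_mem, Finset.sum_ite_mem]
    simp only [Finset.univ_inter]
    have h1 : ∑ u ∈ C, (if t = u then (1:ℝ) else 0) = if t ∈ C then 1 else 0 :=
      Finset.sum_ite_eq C t (fun _ => 1)
    have h2 : ∑ u ∈ C, (if qstep r f (some u) = some t then (1:ℝ) else 0)
        = ((C.filter fun u => qstep r f (some u) = some t).card : ℝ) := Finset.sum_boole _ _
    by_cases ht : t ∈ C
    · rw [h1, h2, if_pos ht, hfib t ht]
      norm_num
    · rw [h1, h2, if_neg ht]
      have hempty : (C.filter fun u => qstep r f (some u) = some t) = ∅ := by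
        rw [Finset.filter_eq_empty_iff]
        intro u hu hQu
        obtain ⟨c', hc', hqc'⟩ := hclos u hu
        rw [hqc'] at hQu
        have : c' = t := Option.some_injective _ hQu
        exact ht (this ▸ hc')
      rw [hempty]
      norm_num
  exact Matrix.exists_vecMul_eq_zero_iff.mp ⟨x, hx0, hker⟩


lemma Nmat_det_of_conv {r : γ} {f : {v : γ // v ≠ r} → γ} (h : ConvTo r f) :
    (Nmat r f).det = 1 := by
  classical
  have hρ : ∀ u z : {v : γ // v ≠ r}, qstep r f (some u) = some z →
      Nat.find (h z) < Nat.find (h u) := by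
    intro u z hz
    have hspec := Nat.find_spec (h u)
    have h0 : Nat.find (h u) ≠ 0 := by
      intro h0
      rw [h0] at hspec
      simp at hspec
    have hz' : (qstep r f)^[Nat.find (h u) - 1] (some z) = none := by
      have h1 : (qstep r f)^[Nat.find (h u) - 1 + 1] (some u) = none := by
        rw [Nat.sub_add_cancel (Nat.one_le_iff_ne_zero.mpr h0)]
        exact hspec
      rwa [Function.iterate_succ_apply, hz] at h1
    have := Nat.find_min' (h z) hz'
    omega
  have hb : (Nmat r f).BlockTriangular
      (fun u => OrderDual.toDual (Nat.find (h u))) := by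
    intro i j hij
    have hij' : Nat.find (h i) < Nat.find (h j) := hij
    simp only [Nmat, Matrix.of_apply]
    rw [if_neg, if_neg, sub_zero]
    · intro hc
      exact absurd (hρ i j (Nmat_entry_iff.mp hc)) (by omega)
    · intro hc
      rw [hc] at hij'
      exact lt_irrefl _ hij'
  rw [hb.det]
  apply Finset.prod_eq_one
  intro k hk
  have hblock : (Nmat r f).toSquareBlock
      (fun u => OrderDual.toDual (Nat.find (h u))) k = 1 := by
    ext u w
    have hbu := u.2
    have hbw := w.2
    simp only [Matrix.toSquareBlock_def, Matrix.one_apply, Nmat, Matrix.of_apply]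
    by_cases huw : u = w
    · subst huw
      rw [if_pos rfl, if_pos rfl, if_neg, sub_zero]
      intro hc
      exact absurd (hρ u.1 u.1 (Nmat_entry_iff.mp hc)) (lt_irrefl _)
    · have hne2 : ¬ ((↑(↑w : {v : γ // v ≠ r}) : γ) = f ↑u) := by
        intro hc
        have hlt := hρ u.1 w.1 (Nmat_entry_iff.mp hc)
        have e1 : Nat.find (h u.1) = OrderDual.ofDual k := hbu
        have e2 : Nat.find (h w.1) = OrderDual.ofDual k := hbw
        omega
      rw [if_neg (fun hc : (↑w : {v : γ // v ≠ r}) = ↑u => huw (Subtype.ext hc.symm)),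
        if_neg hne2, sub_zero, if_neg huw]
  rw [hblock, Matrix.det_one]


lemma arcWt_arcsOf (w : γ → γ → ℝ) (r : γ) (f : {v : γ // v ≠ r} → γ) :
    arcWt w (arcsOf r f) = ∏ u : {v : γ // v ≠ r}, w (f u) ↑u := by
  rw [arcWt, arcsOf, Finset.prod_image]
  intro u _ u' _ huu
  exact Subtype.ext (congrArg Prod.snd huu)

lemma arcsOf_inj {r : γ} {f g : {v : γ // v ≠ r} → γ}
    (hfg : arcsOf r f = arcsOf r g) : f = g := by
  funext u
  have hmem : (f u, (u : γ)) ∈ arcsOf r g := hfg ▸ mem_arcsOf.mpr ⟨u, rfl, rfl⟩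
  obtain ⟨u', h1, h2⟩ := mem_arcsOf.mp hmem
  have h1' : g u' = f u := h1
  have hu : u' = u := Subtype.ext h2
  rw [← h1', hu]

lemma isDivTree_arcsOf {r : γ} {f : {v : γ // v ≠ r} → γ}
    (hf : ∀ u, f u ≠ ↑u) (hc : ConvTo r f) :
    IsDivTreeFrom r (arcsOf r f) := by
  refine ⟨?_, ?_, ?_, conv_acyclic hc⟩
  · intro p hp
    obtain ⟨u, h1, h2⟩ := mem_arcsOf.mp hp
    rw [← h1, ← h2]
    exact hf u
  · intro v hv
    rw [Finset.card_eq_one]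
    refine ⟨(f ⟨v, hv⟩, v), ?_⟩
    ext p
    simp only [Finset.mem_filter, Finset.mem_singleton]
    constructor
    · rintro ⟨hp, h2⟩
      obtain ⟨u, hu1, hu2⟩ := mem_arcsOf.mp hp
      have huv : u = ⟨v, hv⟩ := Subtype.ext (by rw [hu2, h2])
      refine Prod.ext_iff.mpr ⟨?_, h2⟩
      rw [← huv]
      exact hu1.symm
    · rintro rfl
      exact ⟨mem_arcsOf.mpr ⟨⟨v, hv⟩, rfl, rfl⟩, rfl⟩
  · intro a ha
    obtain ⟨u, _, hu2⟩ := mem_arcsOf.mp ha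
    exact u.2 hu2

theorem matrixTree (r : γ) (w : γ → γ → ℝ) :
    ((kirchhoff w).submatrix (fun v : {v : γ // v ≠ r} => (v : γ))
        (fun v : {v : γ // v ≠ r} => (v : γ))).det
      = ∑ T ∈ Finset.univ.filter (IsDivTreeFrom r), arcWt w T := by
  classical
  set M := (kirchhoff w).submatrix (fun v : {v : γ // v ≠ r} => (v : γ))
      (fun v : {v : γ // v ≠ r} => (v : γ)) with hM
  have hrow : M = fun u : {v : γ // v ≠ r} =>
      ∑ k ∈ Finset.univ.erase (↑u : γ), w k ↑u •
        (fun v : {v : γ // v ≠ r} =>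
          (if v = u then (1 : ℝ) else 0) - (if ((v : γ) = k) then 1 else 0)) := by
    funext u v
    rw [hM]
    simp only [Matrix.submatrix_apply, kirchhoff, Matrix.of_apply, Finset.sum_apply,
      Pi.smul_apply, smul_eq_mul]
    by_cases huv : v = u
    · subst huv
      rw [if_pos rfl]
      apply Finset.sum_congr rfl
      intro k hk
      have hkv : ¬ ((v : γ) = k) := fun hc => (Finset.mem_erase.mp hk).1 hc.symm
      rw [if_pos rfl, if_neg hkv, sub_zero, mul_one]
    · have hvu : (↑u : γ) ≠ ↑v := fun hc => huv (Subtype.ext hc.symm)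
      rw [if_neg hvu]
      have hterm : ∀ k ∈ Finset.univ.erase (↑u : γ),
          w k ↑u * ((if v = u then (1:ℝ) else 0) - (if ((v:γ) = k) then 1 else 0))
          = if (v:γ) = k then -w k ↑u else 0 := by
        intro k _
        rw [if_neg huv]
        by_cases hvk : (v:γ) = k
        · rw [if_pos hvk, if_pos hvk]; ring
        · rw [if_neg hvk, if_neg hvk]; ring
      rw [Finset.sum_congr rfl hterm]
      have hvmem : (↑v : γ) ∈ Finset.univ.erase (↑u : γ) :=
        Finset.mem_erase.mpr ⟨fun hc => huv (Subtype.ext hc), Finset.mem_univ _⟩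
      rw [Finset.sum_ite_eq, if_pos hvmem]
  have step1 : M.det = ∑ f ∈ Fintype.piFinset
      (fun u : {v : γ // v ≠ r} => Finset.univ.erase (↑u : γ)),
      (∏ u : {v : γ // v ≠ r}, w (f u) ↑u) * (Nmat r f).det := by
    have hdet2 : M.det
        = (Matrix.detRowAlternating (R := ℝ)
            (n := {v : γ // v ≠ r})).toMultilinearMap M := rfl
    have hexp := (Matrix.detRowAlternating (R := ℝ)
        (n := {v : γ // v ≠ r})).toMultilinearMap.map_sum_finset
      (fun (u : {v : γ // v ≠ r}) (k : γ) => w k ↑u •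
        (fun v : {v : γ // v ≠ r} =>
          (if v = u then (1 : ℝ) else 0) - (if ((v : γ) = k) then 1 else 0)))
      (fun u : {v : γ // v ≠ r} => Finset.univ.erase (↑u : γ))
    rw [hdet2, hrow, hexp]
    apply Finset.sum_congr rfl
    intro f _
    rw [MultilinearMap.map_smul_univ, smul_eq_mul]
    congr 1
  rw [step1]
  have step2 : ∑ f ∈ Fintype.piFinset
      (fun u : {v : γ // v ≠ r} => Finset.univ.erase (↑u : γ)),
      (∏ u : {v : γ // v ≠ r}, w (f u) ↑u) * (Nmat r f).det
      = ∑ f ∈ (Fintype.piFinset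
          (fun u : {v : γ // v ≠ r} => Finset.univ.erase (↑u : γ))).filter (ConvTo r),
        ∏ u : {v : γ // v ≠ r}, w (f u) ↑u := by
    rw [Finset.sum_filter]
    apply Finset.sum_congr rfl
    intro f _
    by_cases hc : ConvTo r f
    · rw [Nmat_det_of_conv hc, mul_one, if_pos hc]
    · rw [Nmat_det_of_not_conv hc, mul_zero, if_neg hc]
  rw [step2]
  refine Finset.sum_bij (fun f _ => arcsOf r f) ?_ ?_ ?_ ?_
  · intro f hf
    rw [Finset.mem_filter] at hf
    rw [Finset.mem_filter]
    refine ⟨Finset.mem_univ _, ?_⟩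
    refine isDivTree_arcsOf ?_ hf.2
    intro u
    have := Fintype.mem_piFinset.mp hf.1 u
    exact (Finset.mem_erase.mp this).1
  · intro f _ g _ hfg
    exact arcsOf_inj hfg
  · intro T hT
    rw [Finset.mem_filter] at hT
    obtain ⟨-, h1, h2, h3, h4⟩ := hT
    choose p hp using fun u : {v : γ // v ≠ r} => Finset.card_eq_one.mp (h2 ↑u u.2)
    have hpT : ∀ u, p u ∈ T ∧ (p u).2 = ↑u := by
      intro u
      have hmem : p u ∈ T.filter (fun q => q.2 = (↑u : γ)) := by
        rw [hp u]; exact Finset.mem_singleton_self _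
      exact ⟨(Finset.mem_filter.mp hmem).1, (Finset.mem_filter.mp hmem).2⟩
    set g : {v : γ // v ≠ r} → γ := fun u => (p u).1 with hgdef
    have hgmem : g ∈ Fintype.piFinset
        (fun u : {v : γ // v ≠ r} => Finset.univ.erase (↑u : γ)) := by
      rw [Fintype.mem_piFinset]
      intro u
      refine Finset.mem_erase.mpr ⟨?_, Finset.mem_univ _⟩
      have hne := h1 (p u) (hpT u).1
      rw [hgdef]
      simp only []
      rw [← (hpT u).2]
      exact hne
    have harcs : arcsOf r g = T := by
      apply Finset.Subset.antisymm
      · intro q hq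
        obtain ⟨u, hq1, hq2⟩ := mem_arcsOf.mp hq
        have hqp : q = p u := by
          refine Prod.ext_iff.mpr ⟨hq1.symm, ?_⟩
          rw [← hq2]
          exact ((hpT u).2).symm
        rw [hqp]
        exact (hpT u).1
      · intro q hq
        have hq2r : q.2 ≠ r := by
          intro hc
          apply h3 q.1
          have heta : (q.1, q.2) = q := rfl
          rw [hc] at heta
          rw [heta]
          exact hq
        have hmem : q ∈ T.filter
            (fun q' => q'.2 = (↑(⟨q.2, hq2r⟩ : {v : γ // v ≠ r}) : γ)) :=
          Finset.mem_filter.mpr ⟨hq, rfl⟩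
        rw [hp ⟨q.2, hq2r⟩] at hmem
        have hqp := Finset.mem_singleton.mp hmem
        refine mem_arcsOf.mpr ⟨⟨q.2, hq2r⟩, ?_, rfl⟩
        exact (congrArg Prod.fst hqp).symm
    have hconv : ConvTo r g := by
      apply conv_of_acyclic
      intro a ha
      rw [harcs] at ha
      exact h4 a ha
    exact ⟨g, Finset.mem_filter.mpr ⟨hgmem, hconv⟩, harcs⟩
  · intro f _
    exact (arcWt_arcsOf w r f).symm

end MTT

noncomputable def someEquiv (β : Type*) : {v : Option β // v ≠ none} ≃ β where
  toFun s := s.1.get (Option.isSome_iff_ne_none.mpr s.2)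
  invFun b := ⟨some b, by simp⟩
  left_inv s := Subtype.ext (by simp)
  right_inv b := by simp


/-- **Lemma 2** (principal minors of the Kirchhoff matrix via contraction). For any
nonempty `φ ⊆ V`, `det L_{−φ} = ε(𝒯_{φ*})`: the principal minor of `L(Γ)` obtained by
deleting the rows and columns of `φ` equals the total weight of the spanning trees of
the contracted digraph `Γ_φ` diverging from the contracted vertex `φ*`. -/
theorem principal_minor_eq_contracted_trees (n : ℕ) (ε : Fin n → Fin n → ℝ)
    (hdiag : ∀ a, ε a a = 0) (φ : Finset (Fin n)) (hφ : φ.Nonempty) :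
    ((kirchhoff ε).submatrix (fun v : {v : Fin n // v ∉ φ} => (v : Fin n))
        (fun v : {v : Fin n // v ∉ φ} => (v : Fin n))).det
      = ∑ T ∈ Finset.univ.filter
            (IsDivTreeFrom (none : Option {v : Fin n // v ∉ φ})),
          arcWt (contractWt ε φ) T := by
  classical
  rw [← matrixTree (none : Option {v : Fin n // v ∉ φ}) (contractWt ε φ)]
  have hsub : ((kirchhoff (contractWt ε φ)).submatrix
        (fun v : {v : Option {v : Fin n // v ∉ φ} // v ≠ none} =>
          (v : Option {v : Fin n // v ∉ φ}))
        (fun v : {v : Option {v : Fin n // v ∉ φ} // v ≠ none} =>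
          (v : Option {v : Fin n // v ∉ φ})))
      = ((kirchhoff ε).submatrix (fun v : {v : Fin n // v ∉ φ} => (v : Fin n))
          (fun v : {v : Fin n // v ∉ φ} => (v : Fin n))).submatrix
        (someEquiv _) (someEquiv _) := by
    ext s t
    obtain ⟨os, hos⟩ := s
    obtain ⟨ot, hot⟩ := t
    obtain ⟨a, rfl⟩ := Option.ne_none_iff_exists'.mp hos
    obtain ⟨b, rfl⟩ := Option.ne_none_iff_exists'.mp hot
    have hes : someEquiv {v : Fin n // v ∉ φ} ⟨some a, hos⟩ = a := rfl
    have het : someEquiv {v : Fin n // v ∉ φ} ⟨some b, hot⟩ = b := rfl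
    simp only [Matrix.submatrix_apply, hes, het, kirchhoff, Matrix.of_apply]
    by_cases hab : a = b
    · subst hab
      rw [if_pos rfl, if_pos rfl]
      -- diagonal sums agree
      rw [Finset.sum_erase_eq_sub (Finset.mem_univ _),
        Finset.sum_erase_eq_sub (Finset.mem_univ _)]
      have hz1 : contractWt ε φ (some a) (some a) = 0 := hdiag ↑a
      have hz2 : ε ↑a ↑a = 0 := hdiag ↑a
      rw [hz1, hz2, sub_zero, sub_zero]
      rw [Fintype.sum_option]
      have hnone : contractWt ε φ none (some a) = ∑ c ∈ φ, ε c ↑a := rfl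
      have hsome : ∀ b' : {v : Fin n // v ∉ φ},
          contractWt ε φ (some b') (some a) = ε ↑b' ↑a := fun _ => rfl
      rw [hnone, Finset.sum_congr rfl (fun b' _ => hsome b')]
      have hcompl : ∑ b' : {v : Fin n // v ∉ φ}, ε ↑b' ↑a = ∑ k ∈ φᶜ, ε k ↑a := by
        rw [Finset.sum_subtype φᶜ (fun x => Finset.mem_compl) (fun k => ε k ↑a)]
      rw [hcompl, Finset.sum_add_sum_compl]
    · have hab1 : (some a : Option {v : Fin n // v ∉ φ}) ≠ some b := by
        simp [hab]
      have hab2 : (↑a : Fin n) ≠ ↑b := fun hc => hab (Subtype.ext hc)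
      rw [if_neg hab1, if_neg hab2]
      rfl
  rw [hsub, Matrix.det_submatrix_equiv_self]
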